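/- Let F ∈ L^1(ℝ) satisfy δ_F := ess sup_x Σ_{n∈ℤ} |F(x+n)| < ∞, and let P(x) = Σ_{|n|≤N} φ(n) e^{2πinx} be a trigonometric polynomial with 1-periodic extension P^# on ℝ. Then F·P^# ∈ L^1(ℝ), its Fourier transform equals ξ ↦ Σ_n φ(n) F̂(ξ−n), and ‖F·P^#‖_{L^1(ℝ)} ≤ δ_F · ‖P‖_{L^1([0,1))}. -/

import Mathlib

open MeasureTheory Complex Real FourierTransform
open scoped ENNReal NNReal

noncomputable section

/-- If `F ∈ L¹(ℝ)` has `δ_F = ess sup_x Σ_n |F(x+n)| ≤ δ` and `P` is a trigonometric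
polynomial with 1-periodic extension `P^#`, then `F·P^# ∈ L¹(ℝ)`, its Fourier transform is
`ξ ↦ Σ_n φ(n) F̂(ξ-n)`, and `‖F·P^#‖_{L¹(ℝ)} ≤ δ_F · ‖P‖_{L¹([0,1))}`. -/
theorem stmt2 (F : ℝ → ℂ) (hF : Integrable F volume) (δ : ℝ)
    (hsum : ∀ᵐ x : ℝ ∂volume, Summable fun n : ℤ => ‖F (x + (n : ℝ))‖)
    (hδ : ∀ᵐ x : ℝ ∂volume, (∑' n : ℤ, ‖F (x + (n : ℝ))‖) ≤ δ)
    (φ : ℤ → ℂ) (hφ : (Function.support φ).Finite)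
    (P : ℝ → ℂ)
    (hP : ∀ x : ℝ, P x = ∑' n : ℤ, φ n * Complex.exp (2 * π * I * (n : ℂ) * (x : ℂ))) :
    Integrable (fun x : ℝ => F x * P x) volume ∧
    (∀ ξ : ℝ, 𝓕 (fun x : ℝ => F x * P x) ξ = ∑' n : ℤ, φ n * 𝓕 F (ξ - (n : ℝ))) ∧
    (∫ x : ℝ, ‖F x * P x‖) ≤ δ * ∫ x in (0 : ℝ)..1, ‖P x‖ := by
  classical
  set s : Finset ℤ := hφ.toFinset with hs
  have hsupp : ∀ n : ℤ, n ∉ s → φ n = 0 := by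
    intro n hn
    by_contra h
    exact hn (hφ.mem_toFinset.mpr (Function.mem_support.mpr h))
  -- finite-sum formula for P
  have hPs : ∀ x : ℝ, P x = ∑ n ∈ s, φ n * Complex.exp (2 * π * I * (n : ℂ) * (x : ℂ)) := by
    intro x
    rw [hP x]
    exact tsum_eq_sum (fun n hn => by rw [hsupp n hn, zero_mul])
  -- continuity of P
  have hPc : Continuous P := by
    have : P = fun x : ℝ => ∑ n ∈ s, φ n * Complex.exp (2 * π * I * (n : ℂ) * (x : ℂ)) :=
      funext hPs
    rw [this]
    refine continuous_finset_sum _ fun n _ => continuous_const.mul ?_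
    exact Complex.continuous_exp.comp (by fun_prop)
  -- bound on P
  have hPbd : ∀ x : ℝ, ‖P x‖ ≤ ∑ n ∈ s, ‖φ n‖ := by
    intro x
    rw [hPs x]
    refine (norm_sum_le _ _).trans (Finset.sum_le_sum fun n _ => ?_)
    rw [norm_mul]
    have : ‖Complex.exp (2 * π * I * (n : ℂ) * (x : ℂ))‖ = 1 := by
      rw [Complex.norm_exp]
      have : (2 * ↑π * I * (n : ℂ) * (x : ℂ)).re = 0 := by simp
      rw [this, Real.exp_zero]
    rw [this, mul_one]
  -- periodicity of P
  have hPer : ∀ (m : ℤ) (x : ℝ), P ((m : ℝ) + x) = P x := by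
    intro m x
    rw [hPs, hPs]
    refine Finset.sum_congr rfl fun n _ => ?_
    congr 1
    rw [show (2 * ↑π * I * (n : ℂ) * ((((m : ℝ) + x) : ℝ) : ℂ))
        = ((n * m : ℤ) : ℂ) * (2 * ↑π * I) + 2 * ↑π * I * (n : ℂ) * (x : ℂ) by
      push_cast; ring]
    rw [Complex.exp_add, Complex.exp_int_mul_two_pi_mul_I, one_mul]
  -- Part 1: integrability
  have hint : Integrable (fun x : ℝ => F x * P x) volume := by
    have := hF.bdd_mul (c := ∑ n ∈ s, ‖φ n‖) hPc.aestronglyMeasurable (Filter.Eventually.of_forall hPbd)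
    simpa [mul_comm] using this
  refine ⟨hint, ?_, ?_⟩
  · -- Part 2: Fourier transform
    intro ξ
    have hker : ∀ w : ℝ, Integrable (fun v : ℝ =>
        Complex.exp (↑(-2 * π * v * w) * I) * F v) volume := by
      intro w
      refine hF.bdd_mul (c := 1) ?_ (Filter.Eventually.of_forall fun v => ?_)
      · exact (Complex.continuous_exp.comp (by fun_prop)).aestronglyMeasurable
      · rw [Complex.norm_exp]
        simp
    have htsum : (∑' n : ℤ, φ n * 𝓕 F (ξ - (n : ℝ)))
        = ∑ n ∈ s, φ n * 𝓕 F (ξ - (n : ℝ)) :=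
      tsum_eq_sum (fun n hn => by rw [hsupp n hn, zero_mul])
    rw [htsum, Real.fourier_real_eq_integral_exp_smul]
    have heq : ∀ v : ℝ, Complex.exp (↑(-2 * π * v * ξ) * I) • (F v * P v)
        = ∑ n ∈ s, φ n * (Complex.exp (↑(-2 * π * v * (ξ - (n : ℝ))) * I) * F v) := by
      intro v
      rw [smul_eq_mul, hPs v]
      simp only [Finset.mul_sum]
      refine Finset.sum_congr rfl fun n _ => ?_
      rw [show (↑(-2 * π * v * (ξ - (n : ℝ))) * I : ℂ)
          = ↑(-2 * π * v * ξ) * I + 2 * ↑π * I * (n : ℂ) * (v : ℂ) by push_cast; ring,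
        Complex.exp_add]
      ring
    rw [integral_congr_ae (Filter.Eventually.of_forall heq),
      integral_finset_sum _ (fun (n : ℤ) _ => (hker (ξ - (n : ℝ))).const_mul (φ n))]
    refine Finset.sum_congr rfl fun n _ => ?_
    rw [integral_const_mul, Real.fourier_real_eq_integral_exp_smul]
    simp_rw [smul_eq_mul]
  · -- Part 3: norm bound
    have hδ0 : 0 ≤ δ := by
      obtain ⟨x, hx⟩ := hδ.exists
      exact le_trans (tsum_nonneg fun n => norm_nonneg _) hx
    haveI : VAddInvariantMeasure (AddSubgroup.zmultiples (1 : ℝ)) ℝ volume :=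
      ⟨fun c s _ => measure_preimage_add _ _ _⟩
    have hfd : IsAddFundamentalDomain (AddSubgroup.zmultiples (1 : ℝ))
        (Set.Ioc (0 : ℝ) 1) volume := by
      simpa using isAddFundamentalDomain_Ioc one_pos 0
    have hmem : ∀ n : ℤ, n • (1 : ℝ) ∈ AddSubgroup.zmultiples (1 : ℝ) := fun n =>
      AddSubgroup.zsmul_mem _ (AddSubgroup.mem_zmultiples _) n
    have hbij : Function.Bijective
        (Set.codRestrict (fun n : ℤ => n • (1 : ℝ)) (AddSubgroup.zmultiples (1 : ℝ)) hmem) := by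
      constructor
      · intro a b hab
        exact (zsmul_left_strictMono one_pos).injective (congrArg Subtype.val hab)
      · rintro ⟨g, hg⟩
        obtain ⟨n, hn⟩ := AddSubgroup.mem_zmultiples_iff.mp hg
        exact ⟨n, Subtype.ext hn⟩
    set e : ℤ ≃ AddSubgroup.zmultiples (1 : ℝ) := Equiv.ofBijective _ hbij with he
    have hecoe : ∀ n : ℤ, ((e n : AddSubgroup.zmultiples (1 : ℝ)) : ℝ) = (n : ℝ) := by
      intro n
      show (n • (1 : ℝ)) = (n : ℝ)
      rw [zsmul_eq_mul, mul_one]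
    set f : ℝ → ℝ≥0∞ := fun x => (‖F x‖₊ : ℝ≥0∞) * (‖P x‖₊ : ℝ≥0∞) with hf
    have key : ∫⁻ x, f x ∂volume
        = ∑' n : ℤ, ∫⁻ x in Set.Ioc (0 : ℝ) 1, f ((n : ℝ) + x) ∂volume := by
      rw [hfd.lintegral_eq_tsum'' f, ← e.tsum_eq]
      refine tsum_congr fun n => lintegral_congr fun x => ?_
      have : (e n) +ᵥ x = (n : ℝ) + x := by
        show ((e n : AddSubgroup.zmultiples (1 : ℝ)) : ℝ) + x = (n : ℝ) + x
        rw [hecoe]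
      rw [this]
    have hFn : ∀ n : ℤ, AEMeasurable (fun x : ℝ => (‖F ((n : ℝ) + x)‖₊ : ℝ≥0∞))
        (volume.restrict (Set.Ioc (0 : ℝ) 1)) := by
      intro n
      exact ((hF.1.comp_quasiMeasurePreserving
        (measurePreserving_add_left volume (n : ℝ)).quasiMeasurePreserving).aemeasurable.enorm).restrict
    have hkey2 : ∀ n : ℤ, ∀ x : ℝ, f ((n : ℝ) + x)
        = (‖F ((n : ℝ) + x)‖₊ : ℝ≥0∞) * (‖P x‖₊ : ℝ≥0∞) := by
      intro n x
      rw [hf]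
      simp only [hPer n x]
    have hswap : ∑' n : ℤ, ∫⁻ x in Set.Ioc (0 : ℝ) 1, f ((n : ℝ) + x) ∂volume
        = ∫⁻ x in Set.Ioc (0 : ℝ) 1,
            (∑' n : ℤ, (‖F ((n : ℝ) + x)‖₊ : ℝ≥0∞)) * (‖P x‖₊ : ℝ≥0∞) ∂volume := by
      simp_rw [hkey2]
      rw [← lintegral_tsum (f := fun (n : ℤ) (x : ℝ) => (‖F ((n : ℝ) + x)‖₊ : ℝ≥0∞) * (‖P x‖₊ : ℝ≥0∞)) fun n => (hFn n).mul
        ((hPc.measurable.nnnorm.coe_nnreal_ennreal).aemeasurable.restrict)]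
      refine lintegral_congr fun x => ?_
      rw [ENNReal.tsum_mul_right]
    have hbound : ∀ᵐ x ∂(volume.restrict (Set.Ioc (0 : ℝ) 1)),
        (∑' n : ℤ, (‖F ((n : ℝ) + x)‖₊ : ℝ≥0∞)) ≤ ENNReal.ofReal δ := by
      refine ae_restrict_of_ae ?_
      filter_upwards [hsum, hδ] with x h1 h2
      have : ∑' n : ℤ, (‖F ((n : ℝ) + x)‖₊ : ℝ≥0∞)
          = ENNReal.ofReal (∑' n : ℤ, ‖F (x + (n : ℝ))‖) := by
        rw [ENNReal.ofReal_tsum_of_nonneg (fun n => norm_nonneg _) h1]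
        exact tsum_congr fun n => by rw [add_comm]; exact (ofReal_norm _).symm
      rw [this]
      exact ENNReal.ofReal_le_ofReal h2
    have hPInt : IntegrableOn P (Set.Ioc (0 : ℝ) 1) volume := hPc.integrableOn_Ioc
    set B : ℝ≥0∞ := ∫⁻ x in Set.Ioc (0 : ℝ) 1, (‖P x‖₊ : ℝ≥0∞) ∂volume with hB
    have hBfin : B ≠ ∞ := hPInt.2.ne
    have hchain : ∫⁻ x, f x ∂volume ≤ ENNReal.ofReal δ * B := by
      rw [key, hswap]
      calc ∫⁻ x in Set.Ioc (0 : ℝ) 1,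
            (∑' n : ℤ, (‖F ((n : ℝ) + x)‖₊ : ℝ≥0∞)) * (‖P x‖₊ : ℝ≥0∞) ∂volume
          ≤ ∫⁻ x in Set.Ioc (0 : ℝ) 1, ENNReal.ofReal δ * (‖P x‖₊ : ℝ≥0∞) ∂volume := by
            refine lintegral_mono_ae ?_
            filter_upwards [hbound] with x hx
            exact mul_le_mul_left hx _
        _ = ENNReal.ofReal δ * B := lintegral_const_mul' _ _ ENNReal.ofReal_ne_top
    have hLHS : ∫ x : ℝ, ‖F x * P x‖ = (∫⁻ x, f x ∂volume).toReal := by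
      rw [integral_norm_eq_lintegral_enorm hint.1]
      congr 1
      refine lintegral_congr fun x => ?_
      show ((‖F x * P x‖₊ : ℝ≥0) : ℝ≥0∞) = f x
      rw [hf, nnnorm_mul, ENNReal.coe_mul]
    have hRHS : ∫ x in (0 : ℝ)..1, ‖P x‖ = B.toReal := by
      rw [intervalIntegral.integral_of_le zero_le_one,
        integral_norm_eq_lintegral_enorm hPc.aestronglyMeasurable.restrict]
      rfl
    rw [hLHS, hRHS]
    calc (∫⁻ x, f x ∂volume).toReal
        ≤ (ENNReal.ofReal δ * B).toReal :=
          ENNReal.toReal_mono (ENNReal.mul_ne_top ENNReal.ofReal_ne_top hBfin) hchain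
      _ = δ * B.toReal := by rw [ENNReal.toReal_mul, ENNReal.toReal_ofReal hδ0]

end
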